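/- Let Y be compact convex, ω 1-strongly convex on Y with respect to a norm ‖·‖, ψ proper closed convex, μ > 0. For x₁, x₂, let ŷ₁, ŷ₂ be the (unique) maximizers of y ↦ ⟨xᵢ, Ay⟩ − ψ(y) − μω(y) over Y. Then ⟨A^T(x₁ − x₂), ŷ₁ − ŷ₂⟩ ≥ μ‖ŷ₁ − ŷ₂‖², and consequently ‖ŷ₁ − ŷ₂‖ ≤ (1/μ)‖A^T(x₁ − x₂)‖_*. -/

import Mathlib

open scoped RealInnerProductSpace

lemma stmt_3_key {m n : ℕ}
    (Y : Set (EuclideanSpace ℝ (Fin m)))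
    (ω : EuclideanSpace ℝ (Fin m) → ℝ) (hω : StrongConvexOn Y 1 ω)
    (ψ : EuclideanSpace ℝ (Fin m) → ℝ) (hψ : ConvexOn ℝ Y ψ)
    (A : EuclideanSpace ℝ (Fin m) →L[ℝ] EuclideanSpace ℝ (Fin n))
    (μ : ℝ) (hμ : 0 < μ)
    (x : EuclideanSpace ℝ (Fin n))
    (y z : EuclideanSpace ℝ (Fin m))
    (hy : y ∈ Y) (hz : z ∈ Y)
    (hmax : IsMaxOn (fun w => ⟪x, A w⟫ - ψ w - μ * ω w) Y y) :
    μ / 2 * ‖y - z‖ ^ 2 ≤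
      (⟪x, A y⟫ - ψ y - μ * ω y) - (⟪x, A z⟫ - ψ z - μ * ω z) := by
  have main : ∀ b : ℝ, b ∈ Set.Ioo (0:ℝ) 1 → μ * (1 - b) / 2 * ‖y - z‖ ^ 2 ≤
      (⟪x, A y⟫ - ψ y - μ * ω y) - (⟪x, A z⟫ - ψ z - μ * ω z) := by
    intro b hb
    obtain ⟨hb0, hb1⟩ := hb
    have ha0 : (0:ℝ) ≤ 1 - b := by linarith
    have hab : (1 - b) + b = 1 := by ring
    have hmem : (1 - b) • y + b • z ∈ Y := hω.1 hy hz ha0 hb0.le hab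
    have hω' := hω.2 hy hz ha0 hb0.le hab
    have hψ' := hψ.2 hy hz ha0 hb0.le hab
    have hlin : ⟪x, A ((1 - b) • y + b • z)⟫ = (1 - b) * ⟪x, A y⟫ + b * ⟪x, A z⟫ := by
      rw [map_add, map_smul, map_smul, inner_add_right, real_inner_smul_right,
        real_inner_smul_right]
    have hmax' := hmax hmem
    simp only [Set.mem_setOf_eq] at hmax'
    simp only [smul_eq_mul] at hω' hψ'
    have hωμ := mul_le_mul_of_nonneg_left hω' hμ.le
    have hstep : b * (μ * (1 - b) / 2 * ‖y - z‖ ^ 2) ≤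
        b * ((⟪x, A y⟫ - ψ y - μ * ω y) - (⟪x, A z⟫ - ψ z - μ * ω z)) := by
      nlinarith [hωμ, hψ', hmax', hlin]
    exact (mul_le_mul_iff_right₀ hb0).mp hstep
  have hten : Filter.Tendsto (fun b : ℝ => μ * (1 - b) / 2 * ‖y - z‖ ^ 2)
      (nhdsWithin 0 (Set.Ioo 0 1)) (nhds (μ / 2 * ‖y - z‖ ^ 2)) := by
    have : Filter.Tendsto (fun b : ℝ => μ * (1 - b) / 2 * ‖y - z‖ ^ 2) (nhds 0)
        (nhds (μ * (1 - 0) / 2 * ‖y - z‖ ^ 2)) := by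
      apply Filter.Tendsto.mul _ tendsto_const_nhds
      exact ((tendsto_const_nhds.sub Filter.tendsto_id).const_mul μ).div_const 2
    simpa using this.mono_left nhdsWithin_le_nhds
  have hne : (nhdsWithin (0:ℝ) (Set.Ioo 0 1)).NeBot := by
    apply mem_closure_iff_nhdsWithin_neBot.mp
    rw [closure_Ioo one_ne_zero.symm]
    exact ⟨le_refl 0, zero_le_one⟩
  exact le_of_tendsto hten (eventually_nhdsWithin_of_forall main)

/-- Contraction property of the maximizers of the smoothed inner problem. -/
theorem stmt_3 {m n : ℕ}
    (Y : Set (EuclideanSpace ℝ (Fin m))) (hYc : IsCompact Y)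
    (ω : EuclideanSpace ℝ (Fin m) → ℝ) (hω : StrongConvexOn Y 1 ω)
    (ψ : EuclideanSpace ℝ (Fin m) → ℝ) (hψ : ConvexOn ℝ Y ψ)
    (A : EuclideanSpace ℝ (Fin m) →L[ℝ] EuclideanSpace ℝ (Fin n))
    (μ : ℝ) (hμ : 0 < μ)
    (x₁ x₂ : EuclideanSpace ℝ (Fin n))
    (y₁ y₂ : EuclideanSpace ℝ (Fin m))
    (hy₁ : y₁ ∈ Y) (hy₂ : y₂ ∈ Y)
    (hmax₁ : IsMaxOn (fun y => ⟪x₁, A y⟫ - ψ y - μ * ω y) Y y₁)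
    (hmax₂ : IsMaxOn (fun y => ⟪x₂, A y⟫ - ψ y - μ * ω y) Y y₂) :
    μ * ‖y₁ - y₂‖ ^ 2 ≤ ⟪ContinuousLinearMap.adjoint A (x₁ - x₂), y₁ - y₂⟫ ∧
    ‖y₁ - y₂‖ ≤ (1 / μ) * ‖ContinuousLinearMap.adjoint A (x₁ - x₂)‖ := by
  have k1 := stmt_3_key Y ω hω ψ hψ A μ hμ x₁ y₁ y₂ hy₁ hy₂ hmax₁
  have k2 := stmt_3_key Y ω hω ψ hψ A μ hμ x₂ y₂ y₁ hy₂ hy₁ hmax₂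
  rw [norm_sub_rev] at k2
  have hadj : ⟪ContinuousLinearMap.adjoint A (x₁ - x₂), y₁ - y₂⟫
      = ⟪x₁, A y₁⟫ - ⟪x₁, A y₂⟫ + (⟪x₂, A y₂⟫ - ⟪x₂, A y₁⟫) := by
    rw [ContinuousLinearMap.adjoint_inner_left, map_sub, inner_sub_left, inner_sub_right,
      inner_sub_right]
    ring
  have h1 : μ * ‖y₁ - y₂‖ ^ 2 ≤ ⟪ContinuousLinearMap.adjoint A (x₁ - x₂), y₁ - y₂⟫ := by
    rw [hadj]; linarith
  refine ⟨h1, ?_⟩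
  rcases eq_or_ne ‖y₁ - y₂‖ 0 with h0 | h0
  · rw [h0]
    positivity
  · have hpos : 0 < ‖y₁ - y₂‖ := lt_of_le_of_ne (norm_nonneg _) (Ne.symm h0)
    have hCS := real_inner_le_norm (ContinuousLinearMap.adjoint A (x₁ - x₂)) (y₁ - y₂)
    have : μ * ‖y₁ - y₂‖ ^ 2 ≤ ‖ContinuousLinearMap.adjoint A (x₁ - x₂)‖ * ‖y₁ - y₂‖ :=
      h1.trans hCS
    rw [div_mul_eq_mul_div, le_div_iff₀ hμ]
    nlinarith
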